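/- Let f : ℝⁿ → ℝ be twice continuously differentiable with L_H-Lipschitz Hessian, L_H > 0. Fix x ∈ ℝⁿ, set g := ∇f(x) and H := ∇²f(x), and suppose g ≠ 0. Let σ > 0, κ_C > 0, η₂ ∈ (0,1), and let v ∈ ℝⁿ satisfy ‖v‖ = 1, ⟨g,v⟩ ≤ 0 and ⟨v,Hv⟩ ≤ −κ_C·√(σ‖g‖). Set s := (κ_C·√(σ‖g‖)/σ)·v. If σ ≥ L_H/(3(1−η₂)), then f(x) − f(x+s) ≥ η₂·(−⟨g,s⟩ − (1/2)⟨s,Hs⟩). -/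

import Mathlib

open RealInnerProductSpace
section AuxCurvStep
open intervalIntegral


variable {n : ℕ}
local notation "E" => EuclideanSpace ℝ (Fin n)

lemma grad_est (f : E → ℝ) (Hess : E → E →L[ℝ] E) (LH : ℝ)
    (hHess : ∀ y, HasFDerivAt (gradient f) (Hess y) y)
    (hLip : ∀ y z, ‖Hess y - Hess z‖ ≤ LH * ‖y - z‖)
    (x u : E) :
    ‖gradient f (x + u) - gradient f x - Hess x u‖ ≤ LH / 2 * ‖u‖ ^ 2 := by
  have hHc : Continuous Hess := by
    have hl : LipschitzWith (Real.toNNReal LH) Hess := by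
      apply LipschitzWith.of_dist_le_mul
      intro y z
      rw [dist_eq_norm, dist_eq_norm]
      refine le_trans (hLip y z) ?_
      have : LH ≤ (Real.toNNReal LH : ℝ) := by
        rw [Real.coe_toNNReal']; exact le_max_left _ _
      exact mul_le_mul_of_nonneg_right this (norm_nonneg _)
    exact hl.continuous
  have hline : ∀ t : ℝ, HasDerivAt (fun t : ℝ => x + t • u) u t := fun t => by
    simpa using ((hasDerivAt_id t).smul_const u).const_add x
  have hG : ∀ t : ℝ, HasDerivAt (fun t : ℝ => gradient f (x + t • u) - t • Hess x u)
      (Hess (x + t • u) u - Hess x u) t := by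
    intro t
    have h2 : HasDerivAt (fun t : ℝ => t • Hess x u) (Hess x u) t := by
      simpa using (hasDerivAt_id t).smul_const (Hess x u)
    exact ((hHess (x + t • u)).comp_hasDerivAt t (hline t)).sub h2
  have hcont : Continuous fun t : ℝ => Hess (x + t • u) u - Hess x u := by
    have : Continuous fun t : ℝ => Hess (x + t • u) :=
      hHc.comp (continuous_const.add (continuous_id.smul continuous_const))
    exact (this.clm_apply continuous_const).sub continuous_const
  have hint : (∫ t in (0:ℝ)..1, (Hess (x + t • u) u - Hess x u)) =
      (gradient f (x + (1:ℝ) • u) - (1:ℝ) • Hess x u) -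
      (gradient f (x + (0:ℝ) • u) - (0:ℝ) • Hess x u) :=
    integral_eq_sub_of_hasDerivAt (fun t _ => hG t) (hcont.intervalIntegrable 0 1)
  simp only [one_smul, zero_smul, add_zero, sub_zero] at hint
  have h1 : gradient f (x + u) - gradient f x - Hess x u =
      ∫ t in (0:ℝ)..1, (Hess (x + t • u) u - Hess x u) := by
    rw [hint]; abel
  rw [h1]
  calc ‖∫ t in (0:ℝ)..1, (Hess (x + t • u) u - Hess x u)‖
      ≤ ∫ t in (0:ℝ)..1, ‖Hess (x + t • u) u - Hess x u‖ :=
        norm_integral_le_integral_norm (by norm_num)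
    _ ≤ ∫ t in (0:ℝ)..1, LH * t * ‖u‖ ^ 2 := by
        apply integral_mono_on (by norm_num)
        · exact (hcont.norm).intervalIntegrable 0 1
        · exact Continuous.intervalIntegrable (by fun_prop) 0 1
        · intro t ht
          have ht0 : 0 ≤ t := ht.1
          calc ‖Hess (x + t • u) u - Hess x u‖
              = ‖(Hess (x + t • u) - Hess x) u‖ := by simp
            _ ≤ ‖Hess (x + t • u) - Hess x‖ * ‖u‖ := (Hess (x + t • u) - Hess x).le_opNorm u
            _ ≤ (LH * ‖t • u‖) * ‖u‖ := by
                have := hLip (x + t • u) x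
                simp only [add_sub_cancel_left] at this
                exact mul_le_mul_of_nonneg_right this (norm_nonneg u)
            _ = LH * t * ‖u‖ ^ 2 := by
                rw [norm_smul, Real.norm_eq_abs, abs_of_nonneg ht0]; ring
    _ = LH / 2 * ‖u‖ ^ 2 := by
        rw [intervalIntegral.integral_mul_const, intervalIntegral.integral_const_mul,
          integral_id]
        ring

lemma taylor_ub (f : E → ℝ) (Hess : E → E →L[ℝ] E) (LH : ℝ)
    (hf : ContDiff ℝ 2 f)
    (hHess : ∀ y, HasFDerivAt (gradient f) (Hess y) y)
    (hLip : ∀ y z, ‖Hess y - Hess z‖ ≤ LH * ‖y - z‖)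
    (x s : E) :
    f (x + s) ≤ f x + ⟪gradient f x, s⟫ + 1 / 2 * ⟪Hess x s, s⟫ + LH / 6 * ‖s‖ ^ 3 := by
  have hdiff : ∀ y : E, HasGradientAt f (gradient f y) y := fun y =>
    ((hf.differentiable (by norm_num)) y).hasGradientAt
  have hline : ∀ t : ℝ, HasDerivAt (fun t : ℝ => x + t • s) s t := fun t => by
    simpa using ((hasDerivAt_id t).smul_const s).const_add x
  have hφ : ∀ t : ℝ, HasDerivAt (fun t : ℝ => f (x + t • s))
      ⟪gradient f (x + t • s), s⟫ t := by
    intro t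
    have := ((hdiff (x + t • s)).hasFDerivAt).comp_hasDerivAt t (hline t)
    simpa [InnerProductSpace.toDual_apply_apply, Function.comp_def] using this
  have hgradc : Continuous (gradient f) := by
    rw [continuous_iff_continuousAt]
    exact fun y => (hHess y).differentiableAt.continuousAt
  have hic : Continuous fun t : ℝ => ⟪gradient f (x + t • s), s⟫ :=
    (hgradc.comp (continuous_const.add (continuous_id.smul continuous_const))).inner
      continuous_const
  have hftc : (∫ t in (0:ℝ)..1, ⟪gradient f (x + t • s), s⟫) = f (x + s) - f x := by
    have := intervalIntegral.integral_eq_sub_of_hasDerivAt (fun t _ => hφ t)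
      (hic.intervalIntegrable 0 1)
    simpa using this
  have hmodel : (∫ t in (0:ℝ)..1, (⟪gradient f x, s⟫ + t * ⟪Hess x s, s⟫)) =
      ⟪gradient f x, s⟫ + 1 / 2 * ⟪Hess x s, s⟫ := by
    rw [intervalIntegral.integral_add (intervalIntegrable_const)
      ((Continuous.intervalIntegrable (by fun_prop) 0 1)),
      intervalIntegral.integral_const, intervalIntegral.integral_mul_const, integral_id]
    norm_num
  have key : f (x + s) - f x - (⟪gradient f x, s⟫ + 1 / 2 * ⟪Hess x s, s⟫) ≤
      LH / 6 * ‖s‖ ^ 3 := by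
    rw [← hftc, ← hmodel, ← intervalIntegral.integral_sub (hic.intervalIntegrable 0 1)
      ((Continuous.intervalIntegrable (by fun_prop) 0 1))]
    have hb : (∫ t in (0:ℝ)..1, (⟪gradient f (x + t • s), s⟫ -
        (⟪gradient f x, s⟫ + t * ⟪Hess x s, s⟫))) ≤
        ∫ t in (0:ℝ)..1, LH / 2 * t ^ 2 * ‖s‖ ^ 3 := by
      apply intervalIntegral.integral_mono_on (by norm_num)
      · exact (hic.sub (by fun_prop)).intervalIntegrable 0 1
      · exact Continuous.intervalIntegrable (by fun_prop) 0 1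
      · intro t ht
        have hge := grad_est f Hess LH hHess hLip x (t • s)
        have h1 : ⟪gradient f (x + t • s), s⟫ - (⟪gradient f x, s⟫ + t * ⟪Hess x s, s⟫) =
            ⟪gradient f (x + t • s) - gradient f x - Hess x (t • s), s⟫ := by
          rw [inner_sub_left, inner_sub_left, map_smul, real_inner_smul_left]
          ring
        rw [h1]
        calc ⟪gradient f (x + t • s) - gradient f x - Hess x (t • s), s⟫
            ≤ ‖gradient f (x + t • s) - gradient f x - Hess x (t • s)‖ * ‖s‖ :=
              real_inner_le_norm _ _
          _ ≤ (LH / 2 * ‖t • s‖ ^ 2) * ‖s‖ := by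
              exact mul_le_mul_of_nonneg_right hge (norm_nonneg s)
          _ = LH / 2 * t ^ 2 * ‖s‖ ^ 3 := by
              rw [norm_smul, Real.norm_eq_abs, abs_of_nonneg ht.1]; ring
    have hval : (∫ t in (0:ℝ)..1, LH / 2 * t ^ 2 * ‖s‖ ^ 3) = LH / 6 * ‖s‖ ^ 3 := by
      have : (fun t : ℝ => LH / 2 * t ^ 2 * ‖s‖ ^ 3) =
          fun t : ℝ => (LH / 2 * ‖s‖ ^ 3) * t ^ 2 := by funext t; ring
      rw [this, intervalIntegral.integral_const_mul, integral_pow]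
      norm_num; ring
    linarith [hb, hval.le, hval.ge]
  linarith [key]

end AuxCurvStep
open intervalIntegral in
/-- Lemma 3.1 of the paper, negative-curvature step case: if the regularization
parameter is large enough, the iteration is very successful. -/
theorem very_successful_curv_step {n : ℕ}
    (f : EuclideanSpace ℝ (Fin n) → ℝ)
    (Hess : EuclideanSpace ℝ (Fin n) → EuclideanSpace ℝ (Fin n) →L[ℝ] EuclideanSpace ℝ (Fin n))
    (LH : ℝ) (hLH : 0 < LH)
    (hf : ContDiff ℝ 2 f)
    (hHess : ∀ y, HasFDerivAt (gradient f) (Hess y) y)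
    (hLip : ∀ y z, ‖Hess y - Hess z‖ ≤ LH * ‖y - z‖)
    (x : EuclideanSpace ℝ (Fin n))
    (hg : gradient f x ≠ 0)
    (σ κC η₂ : ℝ) (hσ : 0 < σ) (hκC : 0 < κC) (hη₂0 : 0 < η₂) (hη₂1 : η₂ < 1)
    (v : EuclideanSpace ℝ (Fin n)) (hv : ‖v‖ = 1) (hgv : ⟪gradient f x, v⟫ ≤ 0)
    (hcurv : ⟪v, Hess x v⟫ ≤ -κC * Real.sqrt (σ * ‖gradient f x‖))
    (s : EuclideanSpace ℝ (Fin n))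
    (hs : s = (κC * Real.sqrt (σ * ‖gradient f x‖) / σ) • v)
    (hσbig : LH / (3 * (1 - η₂)) ≤ σ) :
    f x - f (x + s) ≥ η₂ * (-⟪gradient f x, s⟫ - (1 / 2) * ⟪s, Hess x s⟫) := by
  set g := gradient f x with hgdef
  set α : ℝ := κC * Real.sqrt (σ * ‖g‖) / σ with hα
  have hgnorm : 0 < ‖g‖ := norm_pos_iff.mpr hg
  have hsqrt : 0 < Real.sqrt (σ * ‖g‖) := Real.sqrt_pos.mpr (by positivity)
  have hα0 : 0 < α := by positivity
  have hασ : κC * Real.sqrt (σ * ‖g‖) = α * σ := by rw [hα, div_mul_cancel₀ _ hσ.ne']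
  have hnorms : ‖s‖ = α := by
    rw [hs, norm_smul, Real.norm_eq_abs, abs_of_pos hα0, hv, mul_one]
  have hA : ⟪g, s⟫ ≤ 0 := by
    rw [hs, real_inner_smul_right]
    exact mul_nonpos_of_nonneg_of_nonpos hα0.le hgv
  have hB : ⟪s, Hess x s⟫ ≤ -σ * α ^ 3 := by
    rw [hs, map_smul, real_inner_smul_left, real_inner_smul_right]
    calc α * (α * ⟪v, Hess x v⟫) ≤ α * (α * (-κC * Real.sqrt (σ * ‖g‖))) := by
          apply mul_le_mul_of_nonneg_left (mul_le_mul_of_nonneg_left hcurv hα0.le) hα0.le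
      _ = -σ * α ^ 3 := by rw [neg_mul, hασ]; ring
  have htay := taylor_ub f Hess LH hf hHess hLip x s
  rw [real_inner_comm s (Hess x s), hnorms] at htay
  have hLHσ : LH ≤ 3 * (1 - η₂) * σ := by
    rw [div_le_iff₀ (by linarith)] at hσbig
    linarith [hσbig]
  nlinarith [mul_nonneg (mul_nonneg (by linarith : (0:ℝ) ≤ 1 - η₂) hα0.le)
      (mul_nonneg hα0.le hα0.le),
    mul_le_mul_of_nonneg_right hLHσ (le_of_lt (by positivity : (0:ℝ) < α ^ 3)),
    mul_le_mul_of_nonneg_left hA (by linarith : (0:ℝ) ≤ 1 - η₂),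
    mul_le_mul_of_nonneg_left hB (by linarith : (0:ℝ) ≤ 1 - η₂)]
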